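/- arXiv:2507.18601 — 2 statements merged into one kernel-verified Lean document; each statement's English description precedes it below -/
import Mathlib

section
/- Let r ≥ 2 and let σ_1,…,σ_r be nontrivial cycles in the group of finitely supported permutations of ℕ with pairwise disjoint supports; write |σ| = |supp(σ)| − 1 for the Cayley distance of a cycle. Let (M_n)_{n≥1} be any sequence of real-valued functions on the finitely supported permutations of ℕ. For r′ ≥ 1 and permutations τ_1,…,τ_{r′}, define the permutation-cumulant κ_{n,r′}(τ_1,…,τ_{r′}) := Σ_{π ∈ Θ_{r′}} (−1)^{|π|−1}(|π|−1)!·∏_{B∈π} M_n(∏_{j∈B} τ_j), where Θ_{r′} is the set of set partitions of {1,…,r′} (the τ_j commute, being disjoint). Assume that for each i = 1,…,r the limit lim_{n→∞} n^{|σ_i|/2}·M_n(σ_i) exists. Then the following are equivalent: (1) for every r′ ≥ 1 and every subset {τ_1,…,τ_{r′}} ⊆ {σ_1,…,σ_r}, lim_{n→∞} n^{(|τ_1|+⋯+|τ_{r′}|)/2}·(M_n(τ_1⋯τ_{r′}) − M_n(τ_1)⋯M_n(τ_{r′})) = 0; (2) for every r′ ≥ 2 and every subset {τ_1,…,τ_{r′}}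 ⊆ {σ_1,…,σ_r}, lim_{n→∞} n^{(|τ_1|+⋯+|τ_{r′}|)/2}·κ_{n,r′}(τ_1,…,τ_{r′}) = 0. -/
open Filter

/-- The `m`-th order permutation-cumulant of `τ₁,…,τ_m` with respect to `M`:
`κ(τ₁,…,τ_m) = Σ_{π} (−1)^{|π|−1}(|π|−1)! ∏_{B∈π} M(∏_{j∈B} τ_j)`, the sum being over
set partitions `π` of `{1,…,m}` (blocks multiplied in increasing order of indices). -/
noncomputable def permCumulant {m : ℕ} (M : Equiv.Perm ℕ → ℝ) (τ : Fin m → Equiv.Perm ℕ) :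
    ℝ :=
  ∑ᶠ P : Finpartition (Finset.univ : Finset (Fin m)),
    (-1 : ℝ) ^ (P.parts.card - 1) * (Nat.factorial (P.parts.card - 1) : ℝ) *
      ∏ B ∈ P.parts, M (((B.sort (· ≤ ·)).map τ).prod)



namespace StmtAux

open Finset

variable {α : Type*} [DecidableEq α] {t : Finset α} {a : α}

/-- Add `a` as a new singleton block. -/
def extendP (a : α) (ha : a ∉ t) (π : Finpartition t) : Finpartition (insert a t) where
  parts := insert {a} π.parts
  supIndep := by
    rw [Finset.supIndep_iff_pairwiseDisjoint, coe_insert]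
    refine π.disjoint.insert (fun P hP _ => ?_)
    simp only [id_eq]
    exact Finset.disjoint_singleton_left.2 fun h => ha (π.le hP h)
  sup_parts := by
    rw [Finset.sup_insert, π.sup_parts, id_eq, Finset.sup_eq_union, ← Finset.insert_eq]
  bot_notMem := by
    simp only [Finset.bot_eq_empty, Finset.mem_insert]
    rintro (h | h)
    · exact (Finset.singleton_ne_empty a) h.symm
    · exact π.bot_notMem h

/-- Add `a` to the block `B`. -/
def addTo (a : α) (ha : a ∉ t) (π : Finpartition t) (B : Finset α) (hB : B ∈ π.parts) :
    Finpartition (insert a t) where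
  parts := insert (insert a B) (π.parts.erase B)
  supIndep := by
    rw [Finset.supIndep_iff_pairwiseDisjoint, coe_insert]
    refine (π.disjoint.subset (coe_subset.2 (erase_subset _ _))).insert (fun P hP hne => ?_)
    simp only [id_eq]
    have hP' : P ∈ π.parts := mem_of_mem_erase hP
    have hPB : P ≠ B := ne_of_mem_erase hP
    rw [Finset.disjoint_insert_left]
    exact ⟨fun h => ha (π.le hP' h), π.disjoint hB hP' (fun h => hPB h.symm)⟩
  sup_parts := by
    have h1 : B ⊔ (π.parts.erase B).sup id = t := by
      conv_rhs => rw [← π.sup_parts, ← Finset.insert_erase hB]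
      simp [Finset.sup_insert]
    rw [Finset.sup_insert, id_eq, Finset.sup_eq_union]
    rw [Finset.sup_eq_union] at h1
    rw [Finset.insert_union, h1]
  bot_notMem := by
    simp only [Finset.bot_eq_empty, Finset.mem_insert]
    rintro (h | h)
    · exact (Finset.insert_ne_empty a B) h.symm
    · exact π.bot_notMem (mem_of_mem_erase h)

lemma singleton_not_mem (ha : a ∉ t) (π : Finpartition t) : ({a} : Finset α) ∉ π.parts :=
  fun h => ha (π.le h (mem_singleton_self a))

lemma extendP_parts (ha : a ∉ t) (π : Finpartition t) :
    (extendP a ha π).parts = insert {a} π.parts := rfl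

lemma addTo_parts (ha : a ∉ t) (π : Finpartition t) (B : Finset α) (hB : B ∈ π.parts) :
    (addTo a ha π B hB).parts = insert (insert a B) (π.parts.erase B) := rfl

lemma extendP_parts_card (ha : a ∉ t) (π : Finpartition t) :
    (extendP a ha π).parts.card = π.parts.card + 1 :=
  card_insert_of_notMem (singleton_not_mem ha π)

lemma insertA_not_mem_erase (ha : a ∉ t) (π : Finpartition t) (B : Finset α) :
    insert a B ∉ π.parts.erase B :=
  fun h => ha (π.le (mem_of_mem_erase h) (mem_insert_self a B))

lemma addTo_parts_card (ha : a ∉ t) (π : Finpartition t) (B : Finset α) (hB : B ∈ π.parts) :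
    (addTo a ha π B hB).parts.card = π.parts.card := by
  rw [addTo_parts, card_insert_of_notMem (insertA_not_mem_erase ha π B),
    card_erase_of_mem hB, Nat.sub_add_cancel (Nat.one_le_iff_ne_zero.2 ?_)]
  exact Finset.card_ne_zero_of_mem hB

lemma part_extendP (ha : a ∉ t) (π : Finpartition t) : (extendP a ha π).part a = {a} :=
  Finpartition.part_eq_of_mem _ (mem_insert_self _ _) (mem_singleton_self a)

lemma part_addTo (ha : a ∉ t) (π : Finpartition t) (B : Finset α) (hB : B ∈ π.parts) :
    (addTo a ha π B hB).part a = insert a B :=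
  Finpartition.part_eq_of_mem _ (mem_insert_self _ _) (mem_insert_self a B)

/-- The combined map from pairs (partition of `t`, optional block) to partitions of
`insert a t`. -/
def combine (a : α) (ha : a ∉ t) :
    (Σ π : Finpartition t, Option {B // B ∈ π.parts}) → Finpartition (insert a t)
  | ⟨π, none⟩ => extendP a ha π
  | ⟨π, some ⟨B, hB⟩⟩ => addTo a ha π B hB

lemma extendP_ne_addTo (ha : a ∉ t) (π₁ π₂ : Finpartition t) (B : Finset α)
    (hB : B ∈ π₂.parts) : extendP a ha π₁ ≠ addTo a ha π₂ B hB := by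
  intro h
  have h1 : ({a} : Finset α) = insert a B := by
    rw [← part_extendP ha π₁, ← part_addTo ha π₂ B hB, h]
  obtain ⟨b, hb⟩ := π₂.nonempty_of_mem_parts hB
  have hbB : b ∈ ({a} : Finset α) := h1 ▸ (mem_insert_of_mem hb)
  rw [mem_singleton] at hbB
  exact ha (π₂.le hB (hbB ▸ hb))

lemma combine_injective (a : α) (ha : a ∉ t) : Function.Injective (combine a ha) := by
  rintro ⟨π₁, o₁⟩ ⟨π₂, o₂⟩ h
  match o₁, o₂ with
  | none, none =>
    have h' : extendP a ha π₁ = extendP a ha π₂ := h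
    have hp : π₁.parts = π₂.parts := by
      have h2 : insert {a} π₁.parts = insert {a} π₂.parts := congrArg Finpartition.parts h'
      rw [← Finset.erase_insert (singleton_not_mem ha π₁), h2,
        Finset.erase_insert (singleton_not_mem ha π₂)]
    obtain rfl : π₁ = π₂ := Finpartition.ext hp
    rfl
  | none, some ⟨B, hB⟩ =>
    have h' : extendP a ha π₁ = addTo a ha π₂ B hB := h
    exact absurd h' (extendP_ne_addTo ha π₁ π₂ B hB)
  | some ⟨B, hB⟩, none =>
    have h' : extendP a ha π₂ = addTo a ha π₁ B hB := h.symm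
    exact absurd h' (extendP_ne_addTo ha π₂ π₁ B hB)
  | some ⟨B₁, hB₁⟩, some ⟨B₂, hB₂⟩ =>
    have h' : addTo a ha π₁ B₁ hB₁ = addTo a ha π₂ B₂ hB₂ := h
    have haB₁ : a ∉ B₁ := fun hc => ha (π₁.le hB₁ hc)
    have haB₂ : a ∉ B₂ := fun hc => ha (π₂.le hB₂ hc)
    have hiB : insert a B₁ = insert a B₂ := by
      rw [← part_addTo ha π₁ B₁ hB₁, ← part_addTo ha π₂ B₂ hB₂, h']
    have hBB : B₁ = B₂ := by
      rw [← Finset.erase_insert haB₁, hiB, Finset.erase_insert haB₂]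
    subst hBB
    have hparts : insert (insert a B₁) (π₁.parts.erase B₁)
        = insert (insert a B₁) (π₂.parts.erase B₁) := congrArg Finpartition.parts h'
    have he : π₁.parts.erase B₁ = π₂.parts.erase B₁ := by
      rw [← Finset.erase_insert (insertA_not_mem_erase ha π₁ B₁), hparts,
        Finset.erase_insert (insertA_not_mem_erase ha π₂ B₁)]
    have hp : π₁.parts = π₂.parts := by
      rw [← Finset.insert_erase hB₁, he, Finset.insert_erase hB₂]
    obtain rfl : π₁ = π₂ := Finpartition.ext hp
    rfl

lemma combine_surjective (a : α) (ha : a ∉ t) : Function.Surjective (combine a ha) := by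
  intro π'
  have haIn : a ∈ insert a t := mem_insert_self a t
  have hA : π'.part a ∈ π'.parts := π'.part_mem.2 haIn
  have haA : a ∈ π'.part a := π'.mem_part haIn
  by_cases hAs : π'.part a = {a}
  · refine ⟨⟨⟨π'.parts.erase {a}, π'.supIndep.subset (erase_subset _ _), ?_, ?_⟩, none⟩, ?_⟩
    · apply Finset.Subset.antisymm
      · intro x hx
        rw [Finset.mem_sup] at hx
        obtain ⟨P, hP, hxP⟩ := hx
        have hP' : P ∈ π'.parts := mem_of_mem_erase hP
        have hxt : x ∈ insert a t := π'.le hP' hxP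
        rcases mem_insert.1 hxt with rfl | hxt
        · exact absurd ((π'.part_eq_of_mem hP' hxP).symm.trans hAs) (ne_of_mem_erase hP)
        · exact hxt
      · intro x hxt
        obtain ⟨P, hP, hxP⟩ := π'.exists_mem (mem_insert_of_mem hxt)
        rw [Finset.mem_sup]
        refine ⟨P, Finset.mem_erase.2 ⟨?_, hP⟩, hxP⟩
        rintro rfl
        rw [mem_singleton] at hxP
        exact ha (hxP ▸ hxt)
    · exact fun h => π'.bot_notMem (mem_of_mem_erase h)
    · apply Finpartition.ext
      show insert {a} (π'.parts.erase {a}) = π'.parts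
      rw [Finset.insert_erase (hAs ▸ hA)]
  · -- the part containing a has other elements
    have hBne : ((π'.part a).erase a).Nonempty := by
      rw [Finset.nonempty_iff_ne_empty]
      intro hc
      rcases (Finset.erase_eq_empty_iff (π'.part a) a).1 hc with hc' | hc'
      · exact π'.ne_bot hA hc'
      · exact hAs hc'
    have hBsub : ∀ x ∈ (π'.part a).erase a, x ∈ t := by
      intro x hx
      have hxt : x ∈ insert a t := π'.le hA (mem_of_mem_erase hx)
      rcases mem_insert.1 hxt with rfl | hxt
      · exact absurd rfl (ne_of_mem_erase hx)
      · exact hxt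
    refine ⟨⟨⟨insert ((π'.part a).erase a) (π'.parts.erase (π'.part a)), ?_, ?_, ?_⟩,
      some ⟨(π'.part a).erase a, mem_insert_self _ _⟩⟩, ?_⟩
    · rw [Finset.supIndep_iff_pairwiseDisjoint, coe_insert]
      refine ((π'.disjoint.subset (coe_subset.2 (erase_subset _ _))).insert fun P hP hne => ?_)
      simp only [id_eq]
      have hP' : P ∈ π'.parts := mem_of_mem_erase hP
      have hPA : P ≠ π'.part a := ne_of_mem_erase hP
      exact Finset.disjoint_of_subset_left (erase_subset _ _)
        (π'.disjoint hA hP' (fun h => hPA h.symm))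
    · apply Finset.Subset.antisymm
      · intro x hx
        rw [Finset.mem_sup] at hx
        obtain ⟨P, hP, hxP⟩ := hx
        rcases mem_insert.1 hP with rfl | hP
        · exact hBsub x hxP
        · have hP' : P ∈ π'.parts := mem_of_mem_erase hP
          have hxt : x ∈ insert a t := π'.le hP' hxP
          rcases mem_insert.1 hxt with rfl | hxt
          · exact absurd (π'.part_eq_of_mem hP' hxP).symm (ne_of_mem_erase hP)
          · exact hxt
      · intro x hxt
        obtain ⟨P, hP, hxP⟩ := π'.exists_mem (mem_insert_of_mem hxt)
        rw [Finset.mem_sup]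
        by_cases hPA : P = π'.part a
        · refine ⟨(π'.part a).erase a, mem_insert_self _ _, mem_erase.2 ⟨?_, hPA ▸ hxP⟩⟩
          rintro rfl; exact ha hxt
        · exact ⟨P, mem_insert_of_mem (mem_erase.2 ⟨hPA, hP⟩), hxP⟩
    · simp only [Finset.bot_eq_empty, Finset.mem_insert]
      rintro (h | h)
      · exact hBne.ne_empty h.symm
      · exact π'.bot_notMem (mem_of_mem_erase h)
    · apply Finpartition.ext
      show insert (insert a ((π'.part a).erase a))
        ((insert ((π'.part a).erase a) (π'.parts.erase (π'.part a))).erase ((π'.part a).erase a))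
          = π'.parts
      have hBnotmem : (π'.part a).erase a ∉ π'.parts.erase (π'.part a) := by
        intro hc
        obtain ⟨b, hb⟩ := hBne
        have := π'.eq_of_mem_parts (mem_of_mem_erase hc) hA hb (mem_of_mem_erase hb)
        exact (ne_of_mem_erase hc) this
      rw [Finset.erase_insert hBnotmem, Finset.insert_erase haA, Finset.insert_erase hA]

lemma sum_congr_finpartition {s s' : Finset α} (h : s = s') (f : Finset (Finset α) → ℝ) :
    ∑ π : Finpartition s, f π.parts = ∑ π : Finpartition s', f π.parts := by
  subst h; rfl

lemma sum_fmob (a : α) (ha : a ∉ t) (htne : t.Nonempty) :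
    ∑ π : Finpartition (insert a t),
      ((-1 : ℝ) ^ (π.parts.card - 1) * (Nat.factorial (π.parts.card - 1) : ℝ)) = 0 := by
  rw [← Function.Bijective.sum_comp ⟨combine_injective a ha, combine_surjective a ha⟩
    (fun π => ((-1 : ℝ) ^ (π.parts.card - 1) * (Nat.factorial (π.parts.card - 1) : ℝ)))]
  rw [← Finset.univ_sigma_univ, Finset.sum_sigma]
  apply Finset.sum_eq_zero
  intro π _
  obtain ⟨k, hk⟩ : ∃ k, π.parts.card = k + 1 := by
    have h1 : π.parts.Nonempty := π.parts_nonempty (by simpa using htne.ne_empty)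
    have h2 : 0 < π.parts.card := Finset.card_pos.mpr h1
    exact ⟨π.parts.card - 1, by omega⟩
  have hnone : combine a ha ⟨π, none⟩ = extendP a ha π := rfl
  have h1 : ∀ i : {B // B ∈ π.parts},
      (fun (o : Option {B // B ∈ π.parts}) =>
        ((-1 : ℝ) ^ ((combine a ha ⟨π, o⟩).parts.card - 1) *
          (Nat.factorial ((combine a ha ⟨π, o⟩).parts.card - 1) : ℝ))) (some i)
        = (-1 : ℝ) ^ k * (Nat.factorial k : ℝ) := by
    rintro ⟨B, hB⟩
    have : combine a ha ⟨π, some ⟨B, hB⟩⟩ = addTo a ha π B hB := rfl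
    simp only [this, addTo_parts_card, hk, Nat.add_sub_cancel]
  calc (∑ o : Option {B // B ∈ π.parts},
        ((-1 : ℝ) ^ ((combine a ha ⟨π, o⟩).parts.card - 1) *
          (Nat.factorial ((combine a ha ⟨π, o⟩).parts.card - 1) : ℝ)))
      = (-1 : ℝ) ^ (k + 1) * (Nat.factorial (k + 1) : ℝ)
        + ∑ _i : {B // B ∈ π.parts}, (-1 : ℝ) ^ k * (Nat.factorial k : ℝ) := by
        rw [Fintype.sum_option]
        congr 1
        · rw [hnone, extendP_parts_card, hk, Nat.add_sub_cancel]
        · exact Finset.sum_congr rfl fun i _ => h1 i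
    _ = (-1 : ℝ) ^ (k + 1) * (Nat.factorial (k + 1) : ℝ)
        + (k + 1 : ℝ) * ((-1 : ℝ) ^ k * (Nat.factorial k : ℝ)) := by
        rw [Finset.sum_const, Finset.card_univ, Fintype.card_coe, hk, nsmul_eq_mul]
        push_cast; ring
    _ = 0 := by
        rw [Nat.factorial_succ, pow_succ]
        push_cast; ring

lemma key_identity (m : ℕ) (hm : 2 ≤ m) :
    ∑ π : Finpartition (Finset.univ : Finset (Fin m)),
      ((-1 : ℝ) ^ (π.parts.card - 1) * (Nat.factorial (π.parts.card - 1) : ℝ)) = 0 := by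
  have h2 : 0 < m := by omega
  set a : Fin m := ⟨0, h2⟩ with ha
  have hins : (Finset.univ : Finset (Fin m)) = insert a (Finset.univ.erase a) :=
    (insert_erase (mem_univ a)).symm
  rw [sum_congr_finpartition hins
    (fun p => ((-1 : ℝ) ^ (p.card - 1) * (Nat.factorial (p.card - 1) : ℝ)))]
  refine sum_fmob a (notMem_erase a _) ⟨⟨1, by omega⟩, mem_erase.2 ⟨?_, mem_univ _⟩⟩
  simp [ha, Fin.ext_iff]

end StmtAux


namespace StmtAux

lemma rpow_tendsto_prod {ι : Type*} (A : Finset ι) (e : ι → ℝ) (F : ι → ℕ → ℝ) (l : ι → ℝ)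
    (h : ∀ i ∈ A, Tendsto (fun n : ℕ => (n : ℝ) ^ (e i) * F i n) atTop (nhds (l i))) :
    Tendsto (fun n : ℕ => (n : ℝ) ^ (∑ i ∈ A, e i) * ∏ i ∈ A, F i n) atTop
      (nhds (∏ i ∈ A, l i)) := by
  have h1 : Tendsto (fun n : ℕ => ∏ i ∈ A, ((n : ℝ) ^ (e i) * F i n)) atTop
      (nhds (∏ i ∈ A, l i)) := tendsto_finset_prod A fun i hi => h i hi
  apply Tendsto.congr' _ h1
  filter_upwards [eventually_ge_atTop 1] with n hn
  have hn0 : (0 : ℝ) < n := by exact_mod_cast Nat.lt_of_lt_of_le Nat.zero_lt_one hn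
  rw [Finset.prod_mul_distrib, Real.rpow_sum_of_pos hn0]

/-- The increasing enumeration of `s` as a map `Fin s.card → Fin r`. -/
def phi {r : ℕ} (s : Finset (Fin r)) (i : Fin s.card) : Fin r :=
  (s.orderIsoOfFin rfl i : Fin r)

lemma phi_strictMono {r : ℕ} (s : Finset (Fin r)) : StrictMono (phi s) :=
  (Subtype.strictMono_coe _).comp (s.orderIsoOfFin rfl).strictMono

lemma image_phi {r : ℕ} (s : Finset (Fin r)) :
    Finset.image (phi s) Finset.univ = s := by
  apply Finset.eq_of_subset_of_card_le
  · intro x hx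
    obtain ⟨i, _, rfl⟩ := Finset.mem_image.1 hx
    exact (s.orderIsoOfFin rfl i).2
  · rw [Finset.card_image_of_injective _ (phi_strictMono s).injective, Finset.card_univ,
      Fintype.card_fin]

lemma sort_image {m r : ℕ} (φ : Fin m → Fin r) (hφ : StrictMono φ) (B : Finset (Fin m)) :
    (B.image φ).sort (· ≤ ·) = (B.sort (· ≤ ·)).map φ := by
  have hval : (B.image φ).val = B.val.map φ := by
    rw [Finset.image_val, Multiset.dedup_eq_self.2 (B.nodup.map hφ.injective)]
  rw [← Finset.sort_val, ← Finset.sort_val, hval,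
    Multiset.map_sort (r := (· ≤ ·)) (r' := (· ≤ ·)) (f := φ) (s := B.val) (fun a _ b _ => (hφ.le_iff_le).symm)]

lemma sum_parts_regroup {m : ℕ} (π : Finpartition (Finset.univ : Finset (Fin m)))
    (g : Fin m → ℝ) : ∑ B ∈ π.parts, ∑ i ∈ B, g i = ∑ i, g i := by
  conv_rhs => rw [← π.biUnion_parts]
  rw [Finset.sum_biUnion π.supIndep.pairwiseDisjoint]
  rfl

lemma prod_parts_regroup {m : ℕ} (π : Finpartition (Finset.univ : Finset (Fin m)))
    (g : Fin m → ℝ) : ∏ B ∈ π.parts, ∏ i ∈ B, g i = ∏ i, g i := by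
  conv_rhs => rw [← π.biUnion_parts]
  rw [Finset.prod_biUnion π.supIndep.pairwiseDisjoint]
  rfl

lemma partition_sum_image {r : ℕ} (s : Finset (Fin r))
    (π : Finpartition (Finset.univ : Finset (Fin s.card))) (g : Fin r → ℝ) :
    ∑ B ∈ π.parts, ∑ j ∈ B.image (phi s), g j = ∑ j ∈ s, g j := by
  have h1 : ∀ B : Finset (Fin s.card), ∑ j ∈ B.image (phi s), g j = ∑ i ∈ B, g (phi s i) :=
    fun B => Finset.sum_image (fun x _ y _ h => (phi_strictMono s).injective h)
  calc ∑ B ∈ π.parts, ∑ j ∈ B.image (phi s), g j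
      = ∑ B ∈ π.parts, ∑ i ∈ B, g (phi s i) := Finset.sum_congr rfl fun B _ => h1 B
    _ = ∑ i, g (phi s i) := sum_parts_regroup π _
    _ = ∑ j ∈ Finset.image (phi s) Finset.univ, g j :=
        (Finset.sum_image (fun x _ y _ h => (phi_strictMono s).injective h)).symm
    _ = ∑ j ∈ s, g j := by rw [image_phi]

lemma partition_prod_image {r : ℕ} (s : Finset (Fin r))
    (π : Finpartition (Finset.univ : Finset (Fin s.card))) (g : Fin r → ℝ) :
    ∏ B ∈ π.parts, ∏ j ∈ B.image (phi s), g j = ∏ j ∈ s, g j := by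
  have h1 : ∀ B : Finset (Fin s.card), ∏ j ∈ B.image (phi s), g j = ∏ i ∈ B, g (phi s i) :=
    fun B => Finset.prod_image (fun x _ y _ h => (phi_strictMono s).injective h)
  calc ∏ B ∈ π.parts, ∏ j ∈ B.image (phi s), g j
      = ∏ B ∈ π.parts, ∏ i ∈ B, g (phi s i) := Finset.prod_congr rfl fun B _ => h1 B
    _ = ∏ i, g (phi s i) := prod_parts_regroup π _
    _ = ∏ j ∈ Finset.image (phi s) Finset.univ, g j :=
        (Finset.prod_image (fun x _ y _ h => (phi_strictMono s).injective h)).symm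
    _ = ∏ j ∈ s, g j := by rw [image_phi]

lemma block_tendsto {r : ℕ} (v : Fin r → ℝ) (G : Finset (Fin r) → ℕ → ℝ) (L : Fin r → ℝ)
    (s : Finset (Fin r)) (π : Finpartition (Finset.univ : Finset (Fin s.card)))
    (h : ∀ B ∈ π.parts,
      Tendsto (fun n : ℕ => (n : ℝ) ^ (∑ j ∈ B.image (phi s), v j) * G (B.image (phi s)) n)
        atTop (nhds (∏ j ∈ B.image (phi s), L j))) :
    Tendsto (fun n : ℕ => (n : ℝ) ^ (∑ j ∈ s, v j) * ∏ B ∈ π.parts, G (B.image (phi s)) n)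
      atTop (nhds (∏ j ∈ s, L j)) := by
  have h1 := rpow_tendsto_prod π.parts (fun B => ∑ j ∈ B.image (phi s), v j)
    (fun B n => G (B.image (phi s)) n) (fun B => ∏ j ∈ B.image (phi s), L j) h
  rw [partition_sum_image, partition_prod_image] at h1
  exact h1

lemma permCumulant_eq {r : ℕ} (M' : Equiv.Perm ℕ → ℝ) (σ : Fin r → Equiv.Perm ℕ)
    (s : Finset (Fin r)) :
    (permCumulant M' fun t : Fin s.card => σ (s.orderIsoOfFin rfl t)) =
      ∑ π : Finpartition (Finset.univ : Finset (Fin s.card)),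
        (-1 : ℝ) ^ (π.parts.card - 1) * (Nat.factorial (π.parts.card - 1) : ℝ) *
          ∏ B ∈ π.parts, M' ((((B.image (phi s)).sort (· ≤ ·)).map σ).prod) := by
  unfold permCumulant
  rw [finsum_eq_sum_of_fintype]
  refine Finset.sum_congr rfl fun π _ => ?_
  congr 1
  refine Finset.prod_congr rfl fun B _ => ?_
  congr 1
  rw [sort_image _ (phi_strictMono s), List.map_map]
  rfl

lemma master (r : ℕ) (σ : Fin r → Equiv.Perm ℕ) (M : ℕ → Equiv.Perm ℕ → ℝ)
    (v : Fin r → ℝ) (L : Fin r → ℝ)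
    (hL : ∀ j, Tendsto (fun n : ℕ => (n : ℝ) ^ (v j) * M n (σ j)) atTop (nhds (L j))) :
    ((∀ s : Finset (Fin r), s.Nonempty →
        Tendsto (fun n : ℕ => (n : ℝ) ^ (∑ j ∈ s, v j) *
            (M n (((s.sort (· ≤ ·)).map σ).prod) - ∏ j ∈ s, M n (σ j))) atTop (nhds 0)) ↔
      (∀ s : Finset (Fin r), 2 ≤ s.card →
        Tendsto (fun n : ℕ => (n : ℝ) ^ (∑ j ∈ s, v j) *
            permCumulant (M n) fun t : Fin s.card => σ (s.orderIsoOfFin rfl t))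
          atTop (nhds 0))) := by
  classical
  set G : Finset (Fin r) → ℕ → ℝ := fun t n => M n (((t.sort (· ≤ ·)).map σ).prod) with hG
  have hsingle : ∀ j, Tendsto (fun n : ℕ => (n : ℝ) ^ (∑ j' ∈ ({j} : Finset (Fin r)), v j') *
      G {j} n) atTop (nhds (∏ j' ∈ ({j} : Finset (Fin r)), L j')) := by
    intro j
    simpa [hG, Finset.sort_singleton] using hL j
  have hcumrw : ∀ (s : Finset (Fin r)) (n : ℕ),
      (n : ℝ) ^ (∑ j ∈ s, v j) *
          (permCumulant (M n) fun t : Fin s.card => σ (s.orderIsoOfFin rfl t))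
        = ∑ π : Finpartition (Finset.univ : Finset (Fin s.card)),
            ((-1 : ℝ) ^ (π.parts.card - 1) * (Nat.factorial (π.parts.card - 1) : ℝ)) *
              ((n : ℝ) ^ (∑ j ∈ s, v j) * ∏ B ∈ π.parts, G (B.image (phi s)) n) := by
    intro s n
    rw [permCumulant_eq (M n) σ s, Finset.mul_sum]
    exact Finset.sum_congr rfl fun π _ => by ring
  -- The central condition
  have main : (∀ s : Finset (Fin r), 2 ≤ s.card →
        Tendsto (fun n : ℕ => (n : ℝ) ^ (∑ j ∈ s, v j) *
            permCumulant (M n) fun t : Fin s.card => σ (s.orderIsoOfFin rfl t))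
          atTop (nhds 0)) →
      ∀ (k : ℕ) (t : Finset (Fin r)), t.card ≤ k → t.Nonempty →
        Tendsto (fun n : ℕ => (n : ℝ) ^ (∑ j ∈ t, v j) * G t n) atTop
          (nhds (∏ j ∈ t, L j)) := by
    intro h2 k
    induction k with
    | zero =>
      intro t htk htne
      exact absurd (Finset.card_pos.2 htne) (by omega)
    | succ k ih =>
      intro t htk htne
      by_cases h1 : t.card = 1
      · obtain ⟨j, rfl⟩ := Finset.card_eq_one.1 h1
        exact hsingle j
      · have h2c : 2 ≤ t.card := by
          have := Finset.card_pos.2 htne; omega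
        have hune : (Finset.univ : Finset (Fin t.card)).Nonempty :=
          ⟨⟨0, by omega⟩, Finset.mem_univ _⟩
        set πt : Finpartition (Finset.univ : Finset (Fin t.card)) :=
          Finpartition.indiscrete (by simpa using hune.ne_empty) with hπt
        have hπtparts : πt.parts = {Finset.univ} := rfl
        have hc1 : πt.parts.card = 1 := by rw [hπtparts]; rfl
        have hGt : ∀ n, ∏ B ∈ πt.parts, G (B.image (phi t)) n = G t n := by
          intro n
          rw [hπtparts, Finset.prod_singleton, image_phi]
        have hsplit : ∀ n : ℕ, (n : ℝ) ^ (∑ j ∈ t, v j) * G t n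
            = ((n : ℝ) ^ (∑ j ∈ t, v j) *
                (permCumulant (M n) fun i : Fin t.card => σ (t.orderIsoOfFin rfl i)))
              - ∑ π ∈ (Finset.univ :
                    Finset (Finpartition (Finset.univ : Finset (Fin t.card)))).erase πt,
                  ((-1 : ℝ) ^ (π.parts.card - 1) * (Nat.factorial (π.parts.card - 1) : ℝ)) *
                    ((n : ℝ) ^ (∑ j ∈ t, v j) * ∏ B ∈ π.parts, G (B.image (phi t)) n) := by
          intro n
          rw [hcumrw t n, ← Finset.add_sum_erase _ _ (Finset.mem_univ πt), hGt n, hc1]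
          norm_num
        have hp2 : ∀ π ∈ (Finset.univ :
            Finset (Finpartition (Finset.univ : Finset (Fin t.card)))).erase πt,
            2 ≤ π.parts.card := by
          intro π hπ
          have hπne : π ≠ πt := Finset.ne_of_mem_erase hπ
          have hne : π.parts.Nonempty := π.parts_nonempty (by simpa using hune.ne_empty)
          have hpos : 0 < π.parts.card := Finset.card_pos.2 hne
          by_contra hlt
          have hone : π.parts.card = 1 := by omega
          obtain ⟨B, hB⟩ := Finset.card_eq_one.1 hone
          have hBuniv : B = Finset.univ := by
            have h := π.sup_parts
            rw [hB, Finset.sup_singleton] at h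
            exact h
          exact hπne (Finpartition.ext (by rw [hB, hBuniv, hπtparts]))
        have hBsmall : ∀ π ∈ (Finset.univ :
            Finset (Finpartition (Finset.univ : Finset (Fin t.card)))).erase πt,
            ∀ B ∈ π.parts, (B.image (phi t)).card ≤ k ∧ (B.image (phi t)).Nonempty := by
          intro π hπ B hB
          have hBne : B ≠ Finset.univ := by
            have h21 : 1 < π.parts.card := by have := hp2 π hπ; omega
            obtain ⟨B', hB', hne⟩ := Finset.exists_mem_ne h21 B
            obtain ⟨x, hx⟩ := π.nonempty_of_mem_parts hB'
            intro hc
            have hdisj : Disjoint B' B := π.disjoint hB' hB hne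
            exact (Finset.disjoint_left.1 hdisj hx) (by rw [hc]; exact Finset.mem_univ x)
          have hlt : B.card < t.card := by
            have h3 : B.card < (Finset.univ : Finset (Fin t.card)).card :=
              Finset.card_lt_card (Finset.ssubset_univ_iff.2 hBne)
            rwa [Finset.card_univ, Fintype.card_fin] at h3
          have hcard : (B.image (phi t)).card = B.card :=
            Finset.card_image_of_injective _ (phi_strictMono t).injective
          constructor
          · rw [hcard]; omega
          · exact (π.nonempty_of_mem_parts hB).image _
        have hsub : Tendsto (fun n : ℕ => ∑ π ∈ (Finset.univ :
              Finset (Finpartition (Finset.univ : Finset (Fin t.card)))).erase πt,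
                ((-1 : ℝ) ^ (π.parts.card - 1) * (Nat.factorial (π.parts.card - 1) : ℝ)) *
                  ((n : ℝ) ^ (∑ j ∈ t, v j) * ∏ B ∈ π.parts, G (B.image (phi t)) n))
            atTop (nhds (∑ π ∈ (Finset.univ :
              Finset (Finpartition (Finset.univ : Finset (Fin t.card)))).erase πt,
                ((-1 : ℝ) ^ (π.parts.card - 1) * (Nat.factorial (π.parts.card - 1) : ℝ)) *
                  (∏ j ∈ t, L j))) := by
          refine tendsto_finset_sum _ fun π hπ => ?_
          refine Tendsto.const_mul _ ?_
          refine block_tendsto v G L t π fun B hB => ?_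
          exact ih (B.image (phi t)) (hBsmall π hπ B hB).1 (hBsmall π hπ B hB).2
        have hκ := h2 t h2c
        have hcomb := hκ.sub hsub
        have hval : (0 : ℝ) - (∑ π ∈ (Finset.univ :
              Finset (Finpartition (Finset.univ : Finset (Fin t.card)))).erase πt,
                ((-1 : ℝ) ^ (π.parts.card - 1) * (Nat.factorial (π.parts.card - 1) : ℝ)) *
                  (∏ j ∈ t, L j)) = ∏ j ∈ t, L j := by
          have hsum1 : (∑ π ∈ (Finset.univ :
              Finset (Finpartition (Finset.univ : Finset (Fin t.card)))).erase πt,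
                ((-1 : ℝ) ^ (π.parts.card - 1) * (Nat.factorial (π.parts.card - 1) : ℝ)))
              = -1 := by
            have hkey := key_identity t.card h2c
            rw [← Finset.add_sum_erase _ _ (Finset.mem_univ πt)] at hkey
            have hcv : (-1 : ℝ) ^ (πt.parts.card - 1) *
                (Nat.factorial (πt.parts.card - 1) : ℝ) = 1 := by
              rw [hc1]; norm_num
            rw [hcv] at hkey
            linarith
          rw [← Finset.sum_mul, hsum1]
          ring
        rw [hval] at hcomb
        exact hcomb.congr fun n => (hsplit n).symm
  constructor
  · -- (1) → (2)
    intro h1 s hs2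
    have hC : ∀ t : Finset (Fin r), t.Nonempty →
        Tendsto (fun n : ℕ => (n : ℝ) ^ (∑ j ∈ t, v j) * G t n) atTop
          (nhds (∏ j ∈ t, L j)) := by
      intro t htne
      have hp := rpow_tendsto_prod t v (fun j n => M n (σ j)) L (fun j _ => hL j)
      have hd := h1 t htne
      have := hd.add hp
      rw [zero_add] at this
      exact this.congr fun n => by simp only [hG]; ring
    have hsum : Tendsto (fun n : ℕ =>
        ∑ π : Finpartition (Finset.univ : Finset (Fin s.card)),
          ((-1 : ℝ) ^ (π.parts.card - 1) * (Nat.factorial (π.parts.card - 1) : ℝ)) *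
            ((n : ℝ) ^ (∑ j ∈ s, v j) * ∏ B ∈ π.parts, G (B.image (phi s)) n)) atTop
        (nhds (∑ π : Finpartition (Finset.univ : Finset (Fin s.card)),
          ((-1 : ℝ) ^ (π.parts.card - 1) * (Nat.factorial (π.parts.card - 1) : ℝ)) *
            (∏ j ∈ s, L j))) := by
      refine tendsto_finset_sum _ fun π _ => ?_
      refine Tendsto.const_mul _ ?_
      refine block_tendsto v G L s π fun B hB => ?_
      exact hC _ ((π.nonempty_of_mem_parts hB).image _)
    have hval : (∑ π : Finpartition (Finset.univ : Finset (Fin s.card)),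
        ((-1 : ℝ) ^ (π.parts.card - 1) * (Nat.factorial (π.parts.card - 1) : ℝ)) *
          (∏ j ∈ s, L j)) = 0 := by
      rw [← Finset.sum_mul, key_identity s.card hs2, zero_mul]
    rw [hval] at hsum
    exact hsum.congr fun n => (hcumrw s n).symm
  · -- (2) → (1)
    intro h2 s hsne
    have hC := main h2 s.card s le_rfl hsne
    have hp := rpow_tendsto_prod s v (fun j n => M n (σ j)) L (fun j _ => hL j)
    have := hC.sub hp
    rw [sub_self] at this
    exact this.congr fun n => by simp only [hG]; ring

end StmtAux

/-- Equivalence of vanishing of rescaled "covariance-type" differences and of rescaled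
permutation-cumulants for disjoint cycles `σ₁,…,σ_r`, assuming the rescaled first-order
limits exist. -/
theorem stmt12 (r : ℕ) (hr : 2 ≤ r) (σ : Fin r → Equiv.Perm ℕ)
    (hcyc : ∀ j, (σ j).IsCycle) (hfin : ∀ j, {x | σ j x ≠ x}.Finite)
    (hdisj : Pairwise fun j j' => (σ j).Disjoint (σ j'))
    (M : ℕ → Equiv.Perm ℕ → ℝ)
    (hlim : ∀ j, ∃ L : ℝ,
      Tendsto (fun n : ℕ => (n : ℝ) ^ (((Set.ncard {x | σ j x ≠ x} : ℝ) - 1) / 2) * M n (σ j))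
        atTop (nhds L)) :
    ((∀ s : Finset (Fin r), s.Nonempty →
        Tendsto (fun n : ℕ =>
            (n : ℝ) ^ ((∑ j ∈ s, ((Set.ncard {x | σ j x ≠ x} : ℝ) - 1)) / 2) *
              (M n (((s.sort (· ≤ ·)).map σ).prod) - ∏ j ∈ s, M n (σ j)))
          atTop (nhds 0)) ↔
      (∀ s : Finset (Fin r), 2 ≤ s.card →
        Tendsto (fun n : ℕ =>
            (n : ℝ) ^ ((∑ j ∈ s, ((Set.ncard {x | σ j x ≠ x} : ℝ) - 1)) / 2) *
              permCumulant (M n) fun t : Fin s.card => σ (s.orderIsoOfFin rfl t))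
          atTop (nhds 0))) := by
  classical
  choose L hL using hlim
  have hE : ∀ s : Finset (Fin r), (∑ j ∈ s, ((Set.ncard {x | σ j x ≠ x} : ℝ) - 1)) / 2
      = ∑ j ∈ s, (((Set.ncard {x | σ j x ≠ x} : ℝ) - 1) / 2) := fun s => Finset.sum_div _ _ _
  simp only [hE]
  exact StmtAux.master r σ M (fun j => ((Set.ncard {x | σ j x ≠ x} : ℝ) - 1) / 2) L hL
end

section
/- Let F ∈ ℝ[[X]] be a formal power series and let g : ℕ × ℕ → ℝ. For k ∈ ℕ set A_k := (1 + X²·F)^k ∈ ℝ[[X]]. Suppose that for all k, k′ ∈ ℕ: Σ_{m=0}^{k−1} Σ_{m′=0}^{k′−1} (coefficient of X^m in A_k)·(coefficient of X^{m′} in A_{k′})·g(k−1−m, k′−1−m′) = 0. (This double sum equals the coefficient of z^{−1}w^{−1} in (z^{−1}+zF(z))^{k}(w^{−1}+wF(w))^{k′}·Ext(z,w), where Ext(z,w) = Σ_{i,j≥0} g(i,j) z^i w^j.) Then g(i,j) = 0 for all i, j ∈ ℕ. -/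
/-- Uniqueness lemma: if all the "coefficient extractions"
`[z⁻¹w⁻¹] (z⁻¹+zF(z))^k (w⁻¹+wF(w))^{k'} Σ_{i,j} g(i,j) zⁱwʲ` vanish, written concretely
as double sums of coefficients of `A_k = (1 + X²F)^k`, then `g ≡ 0`. -/
theorem stmt14 (F : PowerSeries ℝ) (g : ℕ → ℕ → ℝ)
    (h : ∀ k k' : ℕ,
      (∑ m ∈ Finset.range k, ∑ m' ∈ Finset.range k',
        (PowerSeries.coeff m ((1 + PowerSeries.X ^ 2 * F) ^ k)) *
          (PowerSeries.coeff m' ((1 + PowerSeries.X ^ 2 * F) ^ k')) *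
          g (k - 1 - m) (k' - 1 - m')) = 0) :
    ∀ i j : ℕ, g i j = 0 := by
  suffices key : ∀ n i j, i + j = n → g i j = 0 by
    intro i j; exact key (i + j) i j rfl
  intro n
  induction n using Nat.strong_induction_on with
  | _ n IH =>
    intro i j hij
    have hz : ∀ m m', m ≤ i → m' ≤ j → m + m' ≠ 0 → g (i - m) (j - m') = 0 := by
      intro m m' hm hm' hne
      exact IH ((i - m) + (j - m')) (by omega) _ _ rfl
    have hc0 : ∀ k : ℕ,
        (PowerSeries.coeff 0 ((1 + PowerSeries.X ^ 2 * F : PowerSeries ℝ) ^ k)) = 1 := by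
      intro k
      simp [PowerSeries.coeff_zero_eq_constantCoeff, map_pow, map_add, map_mul, map_one]
    have H := h (i + 1) (j + 1)
    simp only [Nat.add_sub_cancel] at H
    rw [Finset.sum_eq_single 0 (fun m hm hm0 => ?_) (fun hc => absurd (Finset.mem_range.2 (Nat.succ_pos i)) hc)] at H
    · rw [Finset.sum_eq_single 0 (fun m' hm' hm0 => ?_) (fun hc => absurd (Finset.mem_range.2 (Nat.succ_pos j)) hc)] at H
      · simpa [hc0] using H
      · have : m' ≤ j := Nat.lt_succ_iff.1 (Finset.mem_range.1 hm')
        rw [hz 0 m' (Nat.zero_le _) this (by omega), mul_zero]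
    · rw [Finset.sum_eq_zero]
      intro m' hm'
      have h1 : m ≤ i := Nat.lt_succ_iff.1 (Finset.mem_range.1 hm)
      have h2 : m' ≤ j := Nat.lt_succ_iff.1 (Finset.mem_range.1 hm')
      rw [hz m m' h1 h2 (by omega), mul_zero]
end
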